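/- Let (E, ‖·‖_E) be a Banach space, L a bounded operator on E with ‖L‖ ≤ 1, and suppose there is a Hilbert space H and a linear map S : E → H with ‖L x‖_E ≤ ‖S x‖_H and ‖S x‖_H ≤ ‖x‖_E for all x. Let (β_{ijk}) for 1 ≤ i ≤ d, 1 ≤ j ≤ d', k ∈ ℕ be coefficients with matrices B_k = (β_{ijk})_{ji} such that ∑_k ‖B_k‖ < ∞, and let h_{ij}(L) = ∑_k β_{ijk} L^k. Then for any x_1, …, x_d ∈ E, √(∑_j ‖∑_i h_{ij}(L) x_i‖_E²) ≤ (‖B_{0,|·|}‖ + ∑_{k≥1} ‖B_k‖) · √(∑_i ‖x_i‖_E²), where B_{0,|·|} is the matrix of absolute values of B_0 and ‖·‖ on matrices is the operator (spectral) norm. -/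

import Mathlib

open Finset

/-- The operator (spectral) norm of a real matrix, i.e. the norm of the induced
operator between Euclidean spaces. -/
noncomputable def specNorm {d d' : ℕ} (B : Matrix (Fin d') (Fin d) ℝ) : ℝ :=
  ‖LinearMap.toContinuousLinearMap (Matrix.toEuclideanLin B)‖

section Helpers

variable {d d' : ℕ}

lemma specNorm_nonneg (B : Matrix (Fin d') (Fin d) ℝ) : 0 ≤ specNorm B :=
  norm_nonneg _

lemma specNorm_bound (B : Matrix (Fin d') (Fin d) ℝ) (c : Fin d → ℝ) :
    Real.sqrt (∑ j, (∑ i, B j i * c i) ^ 2) ≤ specNorm B * Real.sqrt (∑ i, (c i) ^ 2) := by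
  have h := (LinearMap.toContinuousLinearMap (Matrix.toEuclideanLin B)).le_opNorm
    ((WithLp.equiv 2 (Fin d → ℝ)).symm c)
  have h1 : ‖LinearMap.toContinuousLinearMap (Matrix.toEuclideanLin B)
      ((WithLp.equiv 2 (Fin d → ℝ)).symm c)‖
      = Real.sqrt (∑ j, (∑ i, B j i * c i) ^ 2) := by
    rw [show (LinearMap.toContinuousLinearMap (Matrix.toEuclideanLin B)
      ((WithLp.equiv 2 (Fin d → ℝ)).symm c) : EuclideanSpace ℝ (Fin d'))
      = (WithLp.equiv 2 (Fin d' → ℝ)).symm (Matrix.mulVec B c) from rfl]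
    rw [EuclideanSpace.norm_eq]
    congr 1
    refine Finset.sum_congr rfl fun j _ => ?_
    rw [Real.norm_eq_abs, sq_abs]
    rfl
  have h2 : ‖(WithLp.equiv 2 (Fin d → ℝ)).symm c‖ = Real.sqrt (∑ i, (c i) ^ 2) := by
    rw [EuclideanSpace.norm_eq]
    congr 1
    refine Finset.sum_congr rfl fun i _ => ?_
    rw [Real.norm_eq_abs, sq_abs]; rfl
  rw [h1, h2] at h
  exact h

lemma specNorm_bound_sq (B : Matrix (Fin d') (Fin d) ℝ) (c : Fin d → ℝ) :
    ∑ j, (∑ i, B j i * c i) ^ 2 ≤ specNorm B ^ 2 * ∑ i, (c i) ^ 2 := by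
  have h := specNorm_bound B c
  have h1 : (0:ℝ) ≤ ∑ j, (∑ i, B j i * c i) ^ 2 := Finset.sum_nonneg fun _ _ => sq_nonneg _
  have h2 : (0:ℝ) ≤ ∑ i, (c i) ^ 2 := Finset.sum_nonneg fun _ _ => sq_nonneg _
  have := mul_self_le_mul_self (Real.sqrt_nonneg _) h
  rw [Real.mul_self_sqrt h1] at this
  calc ∑ j, (∑ i, B j i * c i) ^ 2 ≤ _ := this
    _ = specNorm B ^ 2 * ∑ i, (c i) ^ 2 := by
        rw [mul_mul_mul_comm, Real.mul_self_sqrt h2, sq]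

lemma specNorm_entry_le (B : Matrix (Fin d') (Fin d) ℝ) (j : Fin d') (i : Fin d) :
    |B j i| ≤ specNorm B := by
  have h := specNorm_bound B (fun i' => if i' = i then (1:ℝ) else 0)
  have hc : ∑ i', (if i' = i then (1:ℝ) else 0) ^ 2 = 1 := by
    rw [Finset.sum_eq_single i] <;> simp +contextual
  have hrow : ∀ j', ∑ i', B j' i' * (if i' = i then (1:ℝ) else 0) = B j' i := by
    intro j'
    rw [Finset.sum_eq_single i] <;> simp +contextual
  simp only [hrow, hc, Real.sqrt_one, mul_one] at h
  refine le_trans ?_ h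
  rw [← Real.sqrt_sq_eq_abs]
  apply Real.sqrt_le_sqrt
  exact Finset.single_le_sum (f := fun j' => B j' i ^ 2) (fun _ _ => sq_nonneg _) (mem_univ j)

lemma sqrt_sum_sq_mono {n : ℕ} {a b : Fin n → ℝ} (h : ∀ j, |a j| ≤ b j) :
    Real.sqrt (∑ j, (a j) ^ 2) ≤ Real.sqrt (∑ j, (b j) ^ 2) := by
  apply Real.sqrt_le_sqrt
  refine Finset.sum_le_sum fun j _ => ?_
  rw [← sq_abs (a j)]
  exact pow_le_pow_left₀ (abs_nonneg _) (h j) 2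

lemma l2_triangle {n : ℕ} (a b : Fin n → ℝ) :
    Real.sqrt (∑ j, (a j + b j) ^ 2) ≤
      Real.sqrt (∑ j, (a j) ^ 2) + Real.sqrt (∑ j, (b j) ^ 2) := by
  have h := norm_add_le ((WithLp.equiv 2 (Fin n → ℝ)).symm a) ((WithLp.equiv 2 (Fin n → ℝ)).symm b)
  have he : ∀ c : Fin n → ℝ, ‖(WithLp.equiv 2 (Fin n → ℝ)).symm c‖
      = Real.sqrt (∑ j, (c j) ^ 2) := by
    intro c
    rw [EuclideanSpace.norm_eq]
    congr 1
    exact Finset.sum_congr rfl fun j _ => by rw [Real.norm_eq_abs, sq_abs]; rfl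
  rw [he, he] at h
  refine le_trans (le_of_eq ?_) h
  rw [← he]
  congr 1

lemma banach_row {E : Type*} [NormedAddCommGroup E] [NormedSpace ℝ E]
    (B : Matrix (Fin d') (Fin d) ℝ) (x : Fin d → E) :
    Real.sqrt (∑ j, ‖∑ i, B j i • x i‖ ^ 2) ≤
      specNorm (Matrix.of fun j i => |B j i|) * Real.sqrt (∑ i, ‖x i‖ ^ 2) := by
  have h1 : ∀ j, |‖∑ i, B j i • x i‖| ≤ ∑ i, |B j i| * ‖x i‖ := by
    intro j
    rw [abs_norm]
    refine le_trans (norm_sum_le _ _) (Finset.sum_le_sum fun i _ => ?_)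
    rw [norm_smul, Real.norm_eq_abs]
  refine le_trans (sqrt_sum_sq_mono h1) ?_
  have := specNorm_bound (Matrix.of fun j i => |B j i|) (fun i => ‖x i‖)
  simpa using this

lemma hilbert_row {H : Type*} [NormedAddCommGroup H] [InnerProductSpace ℝ H]
    (B : Matrix (Fin d') (Fin d) ℝ) (y : Fin d → H) :
    Real.sqrt (∑ j, ‖∑ i, B j i • y i‖ ^ 2) ≤
      specNorm B * Real.sqrt (∑ i, ‖y i‖ ^ 2) := by
  set V : Submodule ℝ H := Submodule.span ℝ (Set.range y) with hV
  haveI : FiniteDimensional ℝ V := FiniteDimensional.span_of_finite ℝ (Set.finite_range y)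
  set n := Module.finrank ℝ V with hn
  let b : OrthonormalBasis (Fin n) ℝ V := stdOrthonormalBasis ℝ V
  let ytil : Fin d → V := fun i => ⟨y i, Submodule.subset_span (Set.mem_range_self i)⟩
  let c : Fin d → Fin n → ℝ := fun i t => b.repr (ytil i) t
  have hy : ∀ i, ‖y i‖ ^ 2 = ∑ t, (c i t) ^ 2 := by
    intro i
    have : ‖y i‖ = ‖b.repr (ytil i)‖ := by
      rw [LinearIsometryEquiv.norm_map]; rfl
    rw [this, EuclideanSpace.norm_eq, Real.sq_sqrt (Finset.sum_nonneg fun _ _ => sq_nonneg _)]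
    exact Finset.sum_congr rfl fun t _ => by rw [Real.norm_eq_abs, sq_abs]
  have hrow : ∀ j, ‖∑ i, B j i • y i‖ ^ 2 = ∑ t, (∑ i, B j i * c i t) ^ 2 := by
    intro j
    have hmem : (∑ i, B j i • ytil i : V) = ⟨∑ i, B j i • y i, by
        exact Submodule.sum_mem _ fun i _ => Submodule.smul_mem _ _
          (Submodule.subset_span (Set.mem_range_self i))⟩ := by
      ext
      push_cast [Submodule.coe_sum]
      rfl
    have h1 : ‖∑ i, B j i • y i‖ = ‖b.repr (∑ i, B j i • ytil i)‖ := by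
      rw [LinearIsometryEquiv.norm_map, hmem]
      rfl
    have h2 : ∀ t, b.repr (∑ i, B j i • ytil i) t = ∑ i, B j i * c i t := by
      intro t
      rw [map_sum]
      have : (∑ x : Fin d, b.repr (B j x • ytil x)) t
          = ∑ x : Fin d, (b.repr (B j x • ytil x)) t := by
        rw [WithLp.ofLp_sum]
        exact Finset.sum_apply t Finset.univ _
      rw [this]
      refine Finset.sum_congr rfl fun i _ => ?_
      rw [map_smul]
      rfl
    rw [h1, EuclideanSpace.norm_eq, Real.sq_sqrt (Finset.sum_nonneg fun _ _ => sq_nonneg _)]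
    exact Finset.sum_congr rfl fun t _ => by rw [Real.norm_eq_abs, sq_abs, h2]
  have key : ∑ j, ‖∑ i, B j i • y i‖ ^ 2 ≤ specNorm B ^ 2 * ∑ i, ‖y i‖ ^ 2 := by
    calc ∑ j, ‖∑ i, B j i • y i‖ ^ 2 = ∑ j, ∑ t, (∑ i, B j i * c i t) ^ 2 :=
          Finset.sum_congr rfl fun j _ => hrow j
      _ = ∑ t, ∑ j, (∑ i, B j i * c i t) ^ 2 := Finset.sum_comm
      _ ≤ ∑ t, specNorm B ^ 2 * ∑ i, (c i t) ^ 2 :=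
          Finset.sum_le_sum fun t _ => specNorm_bound_sq B (fun i => c i t)
      _ = specNorm B ^ 2 * ∑ t, ∑ i, (c i t) ^ 2 := by rw [Finset.mul_sum]
      _ = specNorm B ^ 2 * ∑ i, ‖y i‖ ^ 2 := by
          rw [Finset.sum_comm]
          congr 1
          exact Finset.sum_congr rfl fun i _ => (hy i).symm
  calc Real.sqrt (∑ j, ‖∑ i, B j i • y i‖ ^ 2)
      ≤ Real.sqrt (specNorm B ^ 2 * ∑ i, ‖y i‖ ^ 2) := Real.sqrt_le_sqrt key
    _ = specNorm B * Real.sqrt (∑ i, ‖y i‖ ^ 2) := by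
        rw [Real.sqrt_mul (sq_nonneg _), Real.sqrt_sq (specNorm_nonneg B)]

end Helpers

/-- Bound on analytic filters of a contraction `L` on a Banach space `E`
factoring through a Hilbert space `H`. -/
theorem analytic_filter_bound {E H : Type*}
    [NormedAddCommGroup E] [NormedSpace ℝ E] [CompleteSpace E]
    [NormedAddCommGroup H] [InnerProductSpace ℝ H] [CompleteSpace H]
    (L : E →L[ℝ] E) (hL : ‖L‖ ≤ 1)
    (S : E →ₗ[ℝ] H) (hSL : ∀ z, ‖L z‖ ≤ ‖S z‖) (hS : ∀ z, ‖S z‖ ≤ ‖z‖)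
    (d d' : ℕ) (β : Fin d → Fin d' → ℕ → ℝ)
    (hsum : Summable fun k : ℕ => specNorm (Matrix.of fun j i => β i j k))
    (x : Fin d → E) :
    Real.sqrt (∑ j, ‖∑ i, ∑' k : ℕ, β i j k • (L ^ k) (x i)‖ ^ 2) ≤
      (specNorm (Matrix.of fun j i => |β i j 0|)
          + ∑' k : ℕ, specNorm (Matrix.of fun j i => β i j (k + 1)))
        * Real.sqrt (∑ i, ‖x i‖ ^ 2) := by
  set N : ℕ → ℝ := fun k => specNorm (Matrix.of fun j i => β i j k) with hNdef
  set C : ℝ := Real.sqrt (∑ i, ‖x i‖ ^ 2) with hCdef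
  have hC0 : 0 ≤ C := Real.sqrt_nonneg _
  have hN0 : ∀ k, 0 ≤ N k := fun k => specNorm_nonneg _
  have hβle : ∀ i j k, |β i j k| ≤ N k := fun i j k =>
    specNorm_entry_le (Matrix.of fun j i => β i j k) j i
  -- L^k is a contraction
  have hLk : ∀ (k : ℕ) (z : E), ‖(L ^ k) z‖ ≤ ‖z‖ := by
    intro k
    induction k with
    | zero => intro z; simp
    | succ k ih =>
      intro z
      have hz : (L ^ (k+1)) z = (L ^ k) (L z) := by
        rw [pow_succ, ContinuousLinearMap.mul_apply]
      rw [hz]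
      calc ‖(L ^ k) (L z)‖ ≤ ‖L z‖ := ih _
        _ ≤ ‖L‖ * ‖z‖ := L.le_opNorm z
        _ ≤ 1 * ‖z‖ := mul_le_mul_of_nonneg_right hL (norm_nonneg z)
        _ = ‖z‖ := one_mul _
  -- summability of individual filter series
  have hf : ∀ i j, Summable (fun k : ℕ => β i j k • (L ^ k) (x i)) := by
    intro i j
    apply Summable.of_norm
    refine Summable.of_nonneg_of_le (fun k => norm_nonneg _) (fun k => ?_)
      (hsum.mul_right ‖x i‖)
    rw [norm_smul, Real.norm_eq_abs]
    exact mul_le_mul (hβle i j k) (hLk k (x i)) (norm_nonneg _) (hN0 k)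
  have hg : ∀ j, Summable (fun k : ℕ => ∑ i, β i j k • (L ^ k) (x i)) :=
    fun j => summable_sum fun i _ => hf i j
  -- the PiLp aggregated tail
  let G : ℕ → PiLp 2 (fun _ : Fin d' => E) := fun k =>
    (WithLp.equiv 2 (Fin d' → E)).symm (fun j => ∑ i, β i j (k+1) • (L ^ (k+1)) (x i))
  have hGnorm : ∀ k, ‖G k‖
      = Real.sqrt (∑ j, ‖∑ i, β i j (k+1) • (L ^ (k+1)) (x i)‖ ^ 2) := by
    intro k
    rw [PiLp.norm_eq_of_L2]
    rfl
  -- per-k bound on the tail terms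
  have hGk : ∀ k, ‖G k‖ ≤ N (k+1) * C := by
    intro k
    rw [hGnorm]
    have hLw : ∀ j, (∑ i, β i j (k+1) • (L ^ (k+1)) (x i))
        = L (∑ i, β i j (k+1) • (L ^ k) (x i)) := by
      intro j
      rw [map_sum]
      refine Finset.sum_congr rfl fun i _ => ?_
      rw [ContinuousLinearMap.map_smul]
      congr 1
      rw [pow_succ', ContinuousLinearMap.mul_apply]
    have step1 : Real.sqrt (∑ j, ‖∑ i, β i j (k+1) • (L ^ (k+1)) (x i)‖ ^ 2)
        ≤ Real.sqrt (∑ j, ‖∑ i, β i j (k+1) • S ((L ^ k) (x i))‖ ^ 2) := by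
      refine sqrt_sum_sq_mono fun j => ?_
      rw [abs_norm, hLw j]
      refine le_trans (hSL _) (le_of_eq ?_)
      rw [map_sum]
      exact congrArg norm (Finset.sum_congr rfl fun i _ => map_smul S _ _)
    refine le_trans step1 ?_
    have step2 := hilbert_row (Matrix.of fun j i => β i j (k+1))
      (fun i => S ((L ^ k) (x i)))
    simp only [Matrix.of_apply] at step2
    refine le_trans step2 (mul_le_mul_of_nonneg_left ?_ (hN0 (k+1)))
    refine sqrt_sum_sq_mono fun i => ?_
    rw [abs_norm]
    exact le_trans (hS _) (hLk k (x i))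
  -- summability of the tail
  have hNshift : Summable (fun k : ℕ => N (k+1)) := by
    exact (summable_nat_add_iff 1).mpr hsum
  have hGnorms : Summable (fun k => ‖G k‖) :=
    Summable.of_nonneg_of_le (fun k => norm_nonneg _) hGk (hNshift.mul_right C)
  haveI : CompleteSpace (PiLp 2 fun _ : Fin d' => E) :=
    inferInstance
  have hGsum : Summable G := Summable.of_norm hGnorms
  -- componentwise identification of the tail tsum
  have hcomp : ∀ j, (∑' k, G k) j = ∑' k, ∑ i, β i j (k+1) • (L ^ (k+1)) (x i) := by
    intro j
    have h := (hGsum.hasSum.mapL (PiLp.proj (𝕜 := ℝ) 2 (fun _ : Fin d' => E) j)).tsum_eq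
    simp only [PiLp.proj_apply] at h
    exact h.symm
  -- split each filter sum at k = 0
  have hFj : ∀ j, (∑ i, ∑' k : ℕ, β i j k • (L ^ k) (x i))
      = (∑ i, β i j 0 • x i) + (∑' k, G k) j := by
    intro j
    have h0 : (∑ i, β i j 0 • (L ^ 0) (x i)) = ∑ i, β i j 0 • x i :=
      Finset.sum_congr rfl fun i _ => by rw [pow_zero, ContinuousLinearMap.one_apply]
    rw [← Summable.tsum_finsetSum (fun i _ => hf i j), Summable.tsum_eq_zero_add (hg j), h0, hcomp j]
  -- aggregate triangle inequality
  have tri : Real.sqrt (∑ j, ‖∑ i, ∑' k : ℕ, β i j k • (L ^ k) (x i)‖ ^ 2)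
      ≤ Real.sqrt (∑ j, ‖∑ i, β i j 0 • x i‖ ^ 2)
        + Real.sqrt (∑ j, ‖(∑' k, G k) j‖ ^ 2) := by
    have h1 : ∀ j, |‖∑ i, ∑' k : ℕ, β i j k • (L ^ k) (x i)‖|
        ≤ ‖∑ i, β i j 0 • x i‖ + ‖(∑' k, G k) j‖ := by
      intro j
      rw [abs_norm, hFj j]
      exact norm_add_le _ _
    exact le_trans (sqrt_sum_sq_mono h1) (l2_triangle _ _)
  refine le_trans tri ?_
  rw [add_mul]
  refine add_le_add ?_ ?_
  · -- head term
    have := banach_row (Matrix.of fun j i => β i j 0) x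
    simpa using this
  · -- tail term
    have h1 : Real.sqrt (∑ j, ‖(∑' k, G k) j‖ ^ 2) = ‖∑' k, G k‖ := by
      rw [PiLp.norm_eq_of_L2]
    rw [h1]
    refine le_trans (norm_tsum_le_tsum_norm hGnorms) ?_
    calc ∑' k, ‖G k‖ ≤ ∑' k, N (k+1) * C :=
          Summable.tsum_le_tsum hGk hGnorms (hNshift.mul_right C)
      _ = (∑' k, N (k+1)) * C := tsum_mul_right
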